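/- Let 0 < p < ∞ and let d ≥ 2 be an integer. For every natural number k > d + ⌈log₂ d⌉, the entropy numbers satisfy e_k(S_p^{d−1}, ℓ_∞^d) ≤ 2 · e_{k − d − ⌈log₂ d⌉}(B_p^{d−1}, ℓ_∞^{d−1}), where B_p^{d−1} is the unit p-ball in ℝ^{d−1}. -/

import Mathlib

open scoped Pointwise BigOperators

/-- The `ℓ_p` (quasi-)norm on `ℝ^d` for `0 < p < ∞`. -/
noncomputable def pNorm (p : ℝ) {d : ℕ} (x : Fin d → ℝ) : ℝ :=
  (∑ i, |x i| ^ p) ^ (1 / p)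

/-- The `ℓ_∞` norm on `ℝ^d`. -/
noncomputable def supNorm {d : ℕ} (x : Fin d → ℝ) : ℝ :=
  ⨆ i, |x i|

/-- The closed unit ball of `ℓ_p^d`. -/
def pBall (p : ℝ) (d : ℕ) : Set (Fin d → ℝ) := {x | pNorm p x ≤ 1}

/-- The unit sphere of `ℓ_p^d`. -/
def pSphere (p : ℝ) (d : ℕ) : Set (Fin d → ℝ) := {x | pNorm p x = 1}

/-- The closed unit ball of `ℓ_∞^d`. -/
def supBall (d : ℕ) : Set (Fin d → ℝ) := {x | supNorm x ≤ 1}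

/-- The `k`-th (dyadic) entropy number of `K` with respect to the "unit ball" `B`:
the infimum of all `ε > 0` such that `K` can be covered by `2^(k-1)` translates of `ε • B`. -/
noncomputable def entropyNumber {d : ℕ} (K B : Set (Fin d → ℝ)) (k : ℕ) : ℝ :=
  sInf {ε : ℝ | 0 < ε ∧ ∃ c : Fin (2 ^ (k - 1)) → (Fin d → ℝ),
    K ⊆ ⋃ j, (c j +ᵥ ε • B)}

namespace EntropyAux

noncomputable def cellIdx (h a : ℝ) : ℤ := ⌊a / h⌋
def idep (z : ℤ) : ℤ := if 0 ≤ z then z else (-1 - z)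
noncomputable def shiftc (h a : ℝ) (t : ℤ) : ℝ :=
  a - h * t * (if 0 ≤ cellIdx h a then 1 else -1)

lemma idep_nonneg (z : ℤ) : 0 ≤ idep z := by unfold idep; split <;> omega

lemma le_cell (h a : ℝ) (hh : 0 < h) : h * cellIdx h a ≤ a := by
  have := Int.floor_le (a / h)
  calc h * cellIdx h a = (cellIdx h a : ℝ) * h := by ring
  _ ≤ (a / h) * h := by
      apply mul_le_mul_of_nonneg_right this hh.le
  _ = a := by field_simp

lemma cell_lt (h a : ℝ) (hh : 0 < h) : a < h * (cellIdx h a + 1) := by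
  have := Int.lt_floor_add_one (a / h)
  have h2 : a / h * h < ((cellIdx h a : ℝ) + 1) * h :=
    mul_lt_mul_of_pos_right this hh
  rw [div_mul_cancel₀ a hh.ne'] at h2
  linarith [h2]

lemma abs_bounds_pos (h a : ℝ) (hh : 0 < h) (ha : 0 ≤ cellIdx h a) :
    h * idep (cellIdx h a) ≤ |a| ∧ |a| < h * (idep (cellIdx h a) + 1) := by
  have h0 : (0:ℝ) ≤ a := by
    have := le_cell h a hh
    have : (0:ℝ) ≤ h * cellIdx h a := by
      apply mul_nonneg hh.le
      exact_mod_cast ha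
    linarith [le_cell h a hh]
  rw [abs_of_nonneg h0]
  unfold idep
  rw [if_pos ha]
  exact ⟨le_cell h a hh, by exact_mod_cast cell_lt h a hh⟩

lemma abs_bounds_neg (h a : ℝ) (hh : 0 < h) (ha : cellIdx h a < 0) :
    h * idep (cellIdx h a) < |a| ∧ |a| ≤ h * (idep (cellIdx h a) + 1) := by
  have hz : cellIdx h a + 1 ≤ 0 := by omega
  have h0 : a < 0 := by
    have h1 := cell_lt h a hh
    have h2 : h * ((cellIdx h a : ℝ) + 1) ≤ 0 := by
      have : ((cellIdx h a : ℝ) + 1) ≤ 0 := by exact_mod_cast hz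
      exact mul_nonpos_of_nonneg_of_nonpos hh.le this
    linarith
  rw [abs_of_neg h0]
  unfold idep
  rw [if_neg (by omega)]
  constructor
  · have := cell_lt h a hh
    have : h * ((-1 : ℤ) - cellIdx h a : ℤ) = -(h * (cellIdx h a + 1)) := by
      push_cast; ring
    rw [this]
    linarith [cell_lt h a hh]
  · have := le_cell h a hh
    have heq : h * (((-1 : ℤ) - cellIdx h a : ℤ) + 1) = -(h * (cellIdx h a)) := by
      push_cast; ring
    rw [heq]
    linarith

lemma abs_lt_of_idep_lt (h a b : ℝ) (hh : 0 < h)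
    (hsg : 0 ≤ cellIdx h a ↔ 0 ≤ cellIdx h b)
    (hd : idep (cellIdx h a) < idep (cellIdx h b)) : |a| < |b| := by
  have hcast : (idep (cellIdx h a) : ℝ) + 1 ≤ (idep (cellIdx h b) : ℝ) := by
    exact_mod_cast hd
  have hmul : h * (idep (cellIdx h a) + 1) ≤ h * idep (cellIdx h b) := by
    apply mul_le_mul_of_nonneg_left _ hh.le
    linarith
  by_cases hs : 0 ≤ cellIdx h a
  · have hb := hsg.mp hs
    have B1 := (abs_bounds_pos h a hh hs).2
    have B2 := (abs_bounds_pos h b hh hb).1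
    linarith
  · have hb : cellIdx h b < 0 := by
      by_contra hc
      exact hs (hsg.mpr (by omega))
    have B1 := (abs_bounds_neg h a hh (by omega)).2
    have B2 := (abs_bounds_neg h b hh hb).1
    linarith


lemma cellIdx_shiftc (h a : ℝ) (hh : 0 < h) (t : ℤ) :
    cellIdx h (shiftc h a t) =
      if 0 ≤ cellIdx h a then cellIdx h a - t else cellIdx h a + t := by
  by_cases hs : 0 ≤ cellIdx h a
  · rw [if_pos hs]
    unfold shiftc
    rw [if_pos hs]
    unfold cellIdx
    have heq : (a - h * t * 1) / h = a / h - t := by field_simp; try ring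
    rw [heq, Int.floor_sub_intCast]
  · rw [if_neg hs]
    unfold shiftc
    rw [if_neg hs]
    unfold cellIdx
    have heq : (a - h * t * (-1)) / h = a / h + t := by field_simp; try ring
    rw [heq, Int.floor_add_intCast]

lemma sign_shiftc (h a : ℝ) (hh : 0 < h) (t : ℤ) (ht0 : 0 ≤ t)
    (ht : t ≤ idep (cellIdx h a)) :
    (0 ≤ cellIdx h (shiftc h a t) ↔ 0 ≤ cellIdx h a) := by
  rw [cellIdx_shiftc h a hh t]
  unfold idep at ht
  by_cases hs : 0 ≤ cellIdx h a
  · rw [if_pos hs]; rw [if_pos hs] at ht; omega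
  · rw [if_neg hs]; rw [if_neg hs] at ht
    constructor
    · intro hcon; omega
    · intro hcon; omega

lemma idep_shiftc (h a : ℝ) (hh : 0 < h) (t : ℤ) (ht0 : 0 ≤ t)
    (ht : t ≤ idep (cellIdx h a)) :
    idep (cellIdx h (shiftc h a t)) = idep (cellIdx h a) - t := by
  rw [cellIdx_shiftc h a hh t]
  unfold idep at ht ⊢
  by_cases hs : 0 ≤ cellIdx h a
  · rw [if_pos hs] at ht
    rw [if_pos hs, if_pos hs, if_pos (by omega : 0 ≤ cellIdx h a - t)]
  · rw [if_neg hs] at ht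
    rw [if_neg hs, if_neg hs, if_neg (by omega : ¬ 0 ≤ cellIdx h a + t)]
    omega

lemma abs_shiftc_le (h a : ℝ) (hh : 0 < h) (t : ℤ) (ht0 : 0 ≤ t)
    (ht : t ≤ idep (cellIdx h a)) :
    |shiftc h a t| ≤ |a| := by
  have hc1 : h * cellIdx h a ≤ a := by
    have := Int.floor_le (a / h)
    calc h * cellIdx h a = (cellIdx h a : ℝ) * h := by ring
    _ ≤ (a / h) * h := mul_le_mul_of_nonneg_right this hh.le
    _ = a := by field_simp
  have hc2 : a < h * (cellIdx h a + 1) := by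
    have := Int.lt_floor_add_one (a / h)
    have h2 : a / h * h < ((cellIdx h a : ℝ) + 1) * h := mul_lt_mul_of_pos_right this hh
    rw [div_mul_cancel₀ a hh.ne'] at h2
    linarith
  have htR : (0:ℝ) ≤ (t:ℝ) := by exact_mod_cast ht0
  unfold shiftc
  unfold idep at ht
  by_cases hs : 0 ≤ cellIdx h a
  · rw [if_pos hs] at ht ⊢
    have h0 : (0:ℝ) ≤ a := by
      have : (0:ℝ) ≤ h * cellIdx h a := mul_nonneg hh.le (by exact_mod_cast hs)
      linarith
    have hta : h * t ≤ a := by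
      have : (t:ℝ) ≤ (cellIdx h a : ℝ) := by exact_mod_cast ht
      nlinarith
    rw [abs_of_nonneg h0, abs_of_nonneg (by linarith : (0:ℝ) ≤ a - h * t * 1)]
    nlinarith
  · rw [if_neg hs] at ht ⊢
    have hneg : a + h * t < 0 := by
      have hcast : (cellIdx h a : ℝ) + 1 ≤ -(t:ℝ) := by
        have : cellIdx h a + 1 ≤ -t := by omega
        exact_mod_cast this
      nlinarith
    have h0 : a < 0 := by nlinarith
    rw [abs_of_neg h0, abs_of_neg (by linarith : a - h * t * (-1) < 0)]
    nlinarith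

lemma two_cell (ε a z : ℝ) (hε : 0 < ε) (hab : |a - z| ≤ ε) :
    cellIdx (4*ε) a = cellIdx (4*ε) (z - ε) ∨
      cellIdx (4*ε) a = cellIdx (4*ε) (z - ε) + 1 := by
  have hh : (0:ℝ) < 4*ε := by linarith
  have h1 : z - ε ≤ a := by
    have := abs_le.mp hab; linarith [this.1]
  have h2 : a ≤ z + ε := by
    have := abs_le.mp hab; linarith [this.2]
  have hmono : cellIdx (4*ε) (z - ε) ≤ cellIdx (4*ε) a := by
    unfold cellIdx
    apply Int.floor_le_floor
    gcongr
  have hup : cellIdx (4*ε) a ≤ cellIdx (4*ε) (z - ε) + 1 := by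
    unfold cellIdx
    have hQ : (z - ε) / (4*ε) < ⌊(z - ε)/(4*ε)⌋ + 1 := Int.lt_floor_add_one _
    have : a / (4*ε) < (⌊(z - ε)/(4*ε)⌋ : ℝ) + 2 := by
      have hdiv : a / (4*ε) ≤ (z - ε)/(4*ε) + 1/2 := by
        rw [div_add' _ _ _ hh.ne']
        gcongr
        · linarith
      linarith
    have := Int.floor_le_floor (R := ℝ) (le_of_lt this)
    have hfl : ⌊a / (4*ε)⌋ < ⌊(z - ε)/(4*ε)⌋ + 2 := by
      have := Int.floor_lt.mpr (by push_cast; linarith : a / (4*ε) < ((⌊(z - ε)/(4*ε)⌋ + 2 : ℤ) : ℝ))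
      exact this
    omega
  omega

lemma cell_center (h a : ℝ) (hh : 0 < h) :
    |a - (h * cellIdx h a + h/2)| ≤ h/2 := by
  have hc1 : h * cellIdx h a ≤ a := by
    have := Int.floor_le (a / h)
    calc h * cellIdx h a = (cellIdx h a : ℝ) * h := by ring
    _ ≤ (a / h) * h := mul_le_mul_of_nonneg_right this hh.le
    _ = a := by field_simp
  have hc2 : a < h * (cellIdx h a + 1) := by
    have := Int.lt_floor_add_one (a / h)
    have h2 : a / h * h < ((cellIdx h a : ℝ) + 1) * h := mul_lt_mul_of_pos_right this hh
    rw [div_mul_cancel₀ a hh.ne'] at h2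
    linarith
  rw [abs_le]
  constructor <;> nlinarith


/-- membership in a translated scaled sup-ball is coordinatewise closeness -/
lemma mem_eball_iff {n : ℕ} (z v : Fin n → ℝ) (ε : ℝ) (hε : 0 < ε) :
    v ∈ z +ᵥ ε • supBall n ↔ ∀ l, |v l - z l| ≤ ε := by
  constructor
  · rintro ⟨b, ⟨w, hw, rfl⟩, rfl⟩ l
    have hwl : |w l| ≤ 1 := by
      refine le_trans ?_ hw
      exact le_ciSup (f := fun i => |w i|) (Set.Finite.bddAbove (Set.finite_range _)) l
    have : (z +ᵥ ε • w) l - z l = ε * w l := by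
      simp [Pi.vadd_apply, Pi.smul_apply, smul_eq_mul]
      try ring
    rw [this, abs_mul, abs_of_pos hε]
    calc ε * |w l| ≤ ε * 1 := by nlinarith [abs_nonneg (w l)]
    _ = ε := by ring
  · intro hcl
    refine ⟨ε • (ε⁻¹ • (v - z)), ⟨ε⁻¹ • (v - z), ?_, rfl⟩, ?_⟩
    · show supNorm _ ≤ 1
      apply Real.iSup_le _ zero_le_one
      intro l
      have : |(ε⁻¹ • (v - z)) l| = |v l - z l| / ε := by
        simp [Pi.smul_apply, smul_eq_mul, abs_mul, abs_of_pos (inv_pos.mpr hε)]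
        rw [div_eq_inv_mul]
      rw [this]
      rw [div_le_one hε]
      exact hcl l
    · rw [smul_inv_smul₀ hε.ne']
      funext l
      simp [Pi.vadd_apply]

lemma sphere_sum {p : ℝ} (hp : 0 < p) {n : ℕ} {x : Fin n → ℝ}
    (hx : pNorm p x = 1) : ∑ l, |x l| ^ p = 1 := by
  have hS : (0:ℝ) ≤ ∑ l, |x l| ^ p := by positivity
  have h1 : ((∑ l, |x l| ^ p) ^ (1/p)) ^ p = 1 ^ p := by
    rw [show ((∑ l, |x l| ^ p) ^ (1/p)) = pNorm p x from rfl, hx]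
  rw [Real.one_rpow, ← Real.rpow_mul hS, one_div, inv_mul_cancel₀ hp.ne', Real.rpow_one] at h1
  exact h1

lemma pNorm_le_one_iff {p : ℝ} (hp : 0 < p) {n : ℕ} {x : Fin n → ℝ} :
    pNorm p x ≤ 1 ↔ ∑ l, |x l| ^ p ≤ 1 := by
  have hS : (0:ℝ) ≤ ∑ l, |x l| ^ p := by positivity
  constructor
  · intro hx
    have h1 : ((∑ l, |x l| ^ p) ^ (1/p)) ^ p ≤ 1 :=
      Real.rpow_le_one (by positivity) hx hp.le
    rw [← Real.rpow_mul hS, one_div, inv_mul_cancel₀ hp.ne', Real.rpow_one] at h1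
    exact h1
  · intro hx
    exact Real.rpow_le_one hS hx (by positivity)

lemma sum_abs_lt {p : ℝ} (hp : 0 < p) {n : ℕ} [Nonempty (Fin n)] {x x' : Fin n → ℝ}
    (hlt : ∀ l, |x l| < |x' l|) : ∑ l, |x l| ^ p < ∑ l, |x' l| ^ p := by
  apply Finset.sum_lt_sum_of_nonempty Finset.univ_nonempty
  intro l _
  exact Real.rpow_lt_rpow (abs_nonneg _) (hlt l) hp



noncomputable def m0 (h : ℝ) (m : ℕ) (x : Fin (m+1) → ℝ) : ℤ :=
  Finset.univ.inf' Finset.univ_nonempty (fun l => idep (cellIdx h (x l)))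

noncomputable def iArg (h : ℝ) (m : ℕ) (x : Fin (m+1) → ℝ) : Fin (m+1) :=
  (Finset.exists_mem_eq_inf' Finset.univ_nonempty (fun l => idep (cellIdx h (x l)))).choose

lemma iArg_spec (h : ℝ) (m : ℕ) (x : Fin (m+1) → ℝ) :
    idep (cellIdx h (x (iArg h m x))) = m0 h m x :=
  ((Finset.exists_mem_eq_inf' Finset.univ_nonempty
    (fun l => idep (cellIdx h (x l)))).choose_spec.2).symm

lemma m0_le (h : ℝ) (m : ℕ) (x : Fin (m+1) → ℝ) (l : Fin (m+1)) :
    m0 h m x ≤ idep (cellIdx h (x l)) :=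
  Finset.inf'_le _ (Finset.mem_univ l)

lemma m0_nonneg (h : ℝ) (m : ℕ) (x : Fin (m+1) → ℝ) : 0 ≤ m0 h m x := by
  rw [← iArg_spec h m x]
  exact idep_nonneg _

noncomputable def qv (h : ℝ) (m : ℕ) (x : Fin (m+1) → ℝ) : Fin (m+1) → ℝ :=
  fun l => shiftc h (x l) (m0 h m x)

noncomputable def yv (h : ℝ) (m : ℕ) (x : Fin (m+1) → ℝ) : Fin m → ℝ :=
  fun l' => qv h m x ((iArg h m x).succAbove l')

noncomputable def jArg (h ε : ℝ) (m N' : ℕ) (hN' : 0 < N') (c : Fin N' → Fin m → ℝ)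
    (x : Fin (m+1) → ℝ) : Fin N' :=
  @dite _ _ (Classical.dec _)
    (fun hy : yv h m x ∈ ⋃ j, (c j +ᵥ ε • supBall m) => (Set.mem_iUnion.mp hy).choose)
    (fun _ => ⟨0, hN'⟩)

noncomputable def code (h ε : ℝ) (m N' : ℕ) (hN' : 0 < N') (c : Fin N' → Fin m → ℝ)
    (x : Fin (m+1) → ℝ) : Fin (m+1) × Bool × Fin N' × (Fin m → Bool) :=
  (iArg h m x, decide (0 ≤ cellIdx h (x (iArg h m x))), jArg h ε m N' hN' c x,
   fun l' => decide (cellIdx h (yv h m x l') =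
     cellIdx h (c (jArg h ε m N' hN' c x) l' - ε) + 1))


section Specs

variable {p h ε : ℝ} {m N' : ℕ}

lemma qv_abs_le (hh : 0 < h) (x : Fin (m+1) → ℝ) (l : Fin (m+1)) :
    |qv h m x l| ≤ |x l| :=
  abs_shiftc_le h (x l) hh _ (m0_nonneg h m x) (m0_le h m x l)

lemma qv_sign (hh : 0 < h) (x : Fin (m+1) → ℝ) (l : Fin (m+1)) :
    (0 ≤ cellIdx h (qv h m x l) ↔ 0 ≤ cellIdx h (x l)) :=
  sign_shiftc h (x l) hh _ (m0_nonneg h m x) (m0_le h m x l)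

lemma qv_idep (hh : 0 < h) (x : Fin (m+1) → ℝ) (l : Fin (m+1)) :
    idep (cellIdx h (qv h m x l)) = idep (cellIdx h (x l)) - m0 h m x :=
  idep_shiftc h (x l) hh _ (m0_nonneg h m x) (m0_le h m x l)

lemma qv_idx (hh : 0 < h) (x : Fin (m+1) → ℝ) (l : Fin (m+1)) :
    cellIdx h (qv h m x l) =
      if 0 ≤ cellIdx h (x l) then cellIdx h (x l) - m0 h m x
      else cellIdx h (x l) + m0 h m x :=
  cellIdx_shiftc h (x l) hh _

lemma qv_iArg (hh : 0 < h) (x : Fin (m+1) → ℝ) :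
    cellIdx h (qv h m x (iArg h m x)) =
      if 0 ≤ cellIdx h (x (iArg h m x)) then 0 else -1 := by
  have hspec := iArg_spec h m x
  rw [qv_idx hh x (iArg h m x)]
  unfold idep at hspec
  by_cases hs : 0 ≤ cellIdx h (x (iArg h m x))
  · rw [if_pos hs, if_pos hs]; rw [if_pos hs] at hspec; omega
  · rw [if_neg hs, if_neg hs]; rw [if_neg hs] at hspec; omega

lemma yv_mem (hp : 0 < p) (hh : 0 < h) (x : Fin (m+1) → ℝ) (hx : pNorm p x = 1) :
    yv h m x ∈ pBall p m := by
  show pNorm p (yv h m x) ≤ 1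
  rw [pNorm_le_one_iff hp]
  have hsum := sphere_sum hp hx
  calc ∑ l', |yv h m x l'| ^ p
      ≤ ∑ l', |x ((iArg h m x).succAbove l')| ^ p := by
        apply Finset.sum_le_sum
        intro l' _
        exact Real.rpow_le_rpow (abs_nonneg _) (qv_abs_le hh x _) hp.le
    _ ≤ ∑ l, |x l| ^ p := by
        rw [Fin.sum_univ_succAbove (fun l => |x l| ^ p) (iArg h m x)]
        have h0 : (0:ℝ) ≤ |x (iArg h m x)| ^ p := by positivity
        linarith
    _ = 1 := hsum

lemma jArg_spec (hp : 0 < p) (hh : 0 < h) (hN' : 0 < N') (c : Fin N' → Fin m → ℝ)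
    (hc : pBall p m ⊆ ⋃ j, (c j +ᵥ ε • supBall m))
    (x : Fin (m+1) → ℝ) (hx : pNorm p x = 1) :
    yv h m x ∈ c (jArg h ε m N' hN' c x) +ᵥ ε • supBall m := by
  have hy : yv h m x ∈ ⋃ j, (c j +ᵥ ε • supBall m) := hc (yv_mem hp hh x hx)
  unfold jArg
  rw [dif_pos hy]
  exact (Set.mem_iUnion.mp hy).choose_spec

end Specs


lemma cells_eq {p ε : ℝ} {m N' : ℕ} (hp : 0 < p) (hε : 0 < ε) (hN' : 0 < N')
    (c : Fin N' → Fin m → ℝ)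
    (hc : pBall p m ⊆ ⋃ j, (c j +ᵥ ε • supBall m))
    (x x' : Fin (m+1) → ℝ) (hx : pNorm p x = 1) (hx' : pNorm p x' = 1)
    (hcode : code (4*ε) ε m N' hN' c x = code (4*ε) ε m N' hN' c x') :
    ∀ l, cellIdx (4*ε) (x l) = cellIdx (4*ε) (x' l) := by
  have hh : (0:ℝ) < 4*ε := by linarith
  obtain ⟨hieq, hseq, hjeq, hreq⟩ :
      iArg (4*ε) m x = iArg (4*ε) m x' ∧
      decide (0 ≤ cellIdx (4*ε) (x (iArg (4*ε) m x))) =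
        decide (0 ≤ cellIdx (4*ε) (x' (iArg (4*ε) m x'))) ∧
      jArg (4*ε) ε m N' hN' c x = jArg (4*ε) ε m N' hN' c x' ∧
      (fun l' => decide (cellIdx (4*ε) (yv (4*ε) m x l') =
        cellIdx (4*ε) (c (jArg (4*ε) ε m N' hN' c x) l' - ε) + 1)) =
      (fun l' => decide (cellIdx (4*ε) (yv (4*ε) m x' l') =
        cellIdx (4*ε) (c (jArg (4*ε) ε m N' hN' c x') l' - ε) + 1)) := by
    unfold code at hcode
    simpa [Prod.ext_iff] using hcode
  -- β equality: the shifted cells agree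
  have hbeta : ∀ l, cellIdx (4*ε) (qv (4*ε) m x l) = cellIdx (4*ε) (qv (4*ε) m x' l) := by
    intro l
    by_cases hl : l = iArg (4*ε) m x
    · subst hl
      rw [qv_iArg hh x]
      have h2 : cellIdx (4*ε) (qv (4*ε) m x' (iArg (4*ε) m x)) =
          if 0 ≤ cellIdx (4*ε) (x' (iArg (4*ε) m x)) then 0 else -1 := by
        have hq := qv_iArg hh x'
        rw [← hieq] at hq
        exact hq
      rw [h2]
      have hsiff : (0 ≤ cellIdx (4*ε) (x (iArg (4*ε) m x))) ↔
          (0 ≤ cellIdx (4*ε) (x' (iArg (4*ε) m x))) := by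
        have hs2 := hseq
        rw [← hieq] at hs2
        exact decide_eq_decide.mp hs2
      by_cases hs : 0 ≤ cellIdx (4*ε) (x (iArg (4*ε) m x))
      · rw [if_pos hs, if_pos (hsiff.mp hs)]
      · rw [if_neg hs, if_neg (fun hcon => hs (hsiff.mpr hcon))]
    · obtain ⟨l', hl'⟩ := Fin.exists_succAbove_eq hl
      have e1 : qv (4*ε) m x l = yv (4*ε) m x l' := by
        show _ = qv (4*ε) m x ((iArg (4*ε) m x).succAbove l')
        rw [hl']
      have e1' : qv (4*ε) m x' l = yv (4*ε) m x' l' := by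
        show _ = qv (4*ε) m x' ((iArg (4*ε) m x').succAbove l')
        rw [← hieq, hl']
      have hcov := jArg_spec hp hh hN' c hc x hx
      have hcov' := jArg_spec hp hh hN' c hc x' hx'
      have hclose : |yv (4*ε) m x l' - c (jArg (4*ε) ε m N' hN' c x) l'| ≤ ε :=
        (mem_eball_iff _ _ ε hε).mp hcov l'
      have hclose' : |yv (4*ε) m x' l' - c (jArg (4*ε) ε m N' hN' c x) l'| ≤ ε := by
        have := (mem_eball_iff _ _ ε hε).mp hcov' l'
        rw [← hjeq] at this
        exact this
      have htc := two_cell ε (yv (4*ε) m x l') (c (jArg (4*ε) ε m N' hN' c x) l') hε hclose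
      have htc' := two_cell ε (yv (4*ε) m x' l') (c (jArg (4*ε) ε m N' hN' c x) l') hε hclose'
      have hrbit : (cellIdx (4*ε) (yv (4*ε) m x l') =
            cellIdx (4*ε) (c (jArg (4*ε) ε m N' hN' c x) l' - ε) + 1) ↔
          (cellIdx (4*ε) (yv (4*ε) m x' l') =
            cellIdx (4*ε) (c (jArg (4*ε) ε m N' hN' c x) l' - ε) + 1) := by
        have hr := congrFun hreq l'
        rw [← hjeq] at hr
        exact decide_eq_decide.mp hr
      rw [e1, e1']
      rcases htc with hA | hA <;> rcases htc' with hB | hB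
      · rw [hA, hB]
      · exfalso
        have := hrbit.mpr hB
        omega
      · exfalso
        have := hrbit.mp hA
        omega
      · rw [hA, hB]
  -- sign agreement between x and x'
  have hsign : ∀ l, (0 ≤ cellIdx (4*ε) (x l) ↔ 0 ≤ cellIdx (4*ε) (x' l)) := by
    intro l
    rw [← qv_sign hh x l, ← qv_sign hh x' l, hbeta l]
  -- contradiction helper
  have hcontr : ∀ (z z' : Fin (m+1) → ℝ), pNorm p z = 1 → pNorm p z' = 1 →
      (∀ l, (0 ≤ cellIdx (4*ε) (z l) ↔ 0 ≤ cellIdx (4*ε) (z' l))) →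
      (∀ l, idep (cellIdx (4*ε) (z l)) < idep (cellIdx (4*ε) (z' l))) → False := by
    intro z z' hz hz' hsg hd
    have hlt : ∀ l, |z l| < |z' l| :=
      fun l => abs_lt_of_idep_lt (4*ε) _ _ hh (hsg l) (hd l)
    have hsum := sum_abs_lt hp hlt
    rw [sphere_sum hp hz, sphere_sum hp hz'] at hsum
    exact lt_irrefl _ hsum
  rcases lt_trichotomy (m0 (4*ε) m x) (m0 (4*ε) m x') with hlt | heqm | hgt
  · exfalso
    apply hcontr x x' hx hx' hsign
    intro l
    have d1 := qv_idep hh x l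
    have d2 := qv_idep hh x' l
    have d3 : idep (cellIdx (4*ε) (qv (4*ε) m x l)) =
        idep (cellIdx (4*ε) (qv (4*ε) m x' l)) := by rw [hbeta l]
    omega
  · intro l
    have e1 := qv_idx hh x l
    have e2 := qv_idx hh x' l
    have hb := hbeta l
    by_cases hs : 0 ≤ cellIdx (4*ε) (x l)
    · rw [if_pos hs] at e1
      rw [if_pos ((hsign l).mp hs)] at e2
      omega
    · rw [if_neg hs] at e1
      rw [if_neg (fun hcon => hs ((hsign l).mpr hcon))] at e2
      omega
  · exfalso
    apply hcontr x' x hx' hx (fun l => (hsign l).symm)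
    intro l
    have d1 := qv_idep hh x l
    have d2 := qv_idep hh x' l
    have d3 : idep (cellIdx (4*ε) (qv (4*ε) m x l)) =
        idep (cellIdx (4*ε) (qv (4*ε) m x' l)) := by rw [hbeta l]
    omega


lemma master {p ε : ℝ} {m N' : ℕ} (hp : 0 < p) (hε : 0 < ε) (hN' : 0 < N')
    (c : Fin N' → Fin m → ℝ)
    (hc : pBall p m ⊆ ⋃ j, (c j +ᵥ ε • supBall m)) :
    ∃ g : (Fin (m+1) × Bool × Fin N' × (Fin m → Bool)) → (Fin (m+1) → ℝ),
      pSphere p (m+1) ⊆ ⋃ t, (g t +ᵥ (2*ε) • supBall (m+1)) := by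
  classical
  have hh : (0:ℝ) < 4*ε := by linarith
  refine ⟨fun t =>
    if ht : ∃ z : Fin (m+1) → ℝ, pNorm p z = 1 ∧ code (4*ε) ε m N' hN' c z = t
    then (fun l => (4*ε) * cellIdx (4*ε) (ht.choose l) + (4*ε)/2) else 0, ?_⟩
  intro x hx
  have hx1 : pNorm p x = 1 := hx
  apply Set.mem_iUnion.mpr
  refine ⟨code (4*ε) ε m N' hN' c x, ?_⟩
  have hex : ∃ z : Fin (m+1) → ℝ, pNorm p z = 1 ∧
      code (4*ε) ε m N' hN' c z = code (4*ε) ε m N' hN' c x := ⟨x, hx1, rfl⟩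
  beta_reduce
  rw [dif_pos hex]
  obtain ⟨hz₀1, hz₀2⟩ := hex.choose_spec
  have hcells := cells_eq hp hε hN' c hc hex.choose x hz₀1 hx1 hz₀2
  rw [mem_eball_iff _ _ _ (by linarith : (0:ℝ) < 2*ε)]
  intro l
  rw [hcells l]
  have hcc := cell_center (4*ε) (x l) hh
  have h2 : (4*ε)/2 = 2*ε := by ring
  rw [h2] at hcc
  convert hcc using 3
  ring


lemma reindex_cover {n : ℕ} {K B : Set (Fin n → ℝ)} {T : Type} [Fintype T] {M : ℕ}
    (hcard : Fintype.card T ≤ Fintype.card (Fin M)) (g : T → (Fin n → ℝ)) (ρ : ℝ)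
    (hcov : K ⊆ ⋃ t, (g t +ᵥ ρ • B)) :
    ∃ c' : Fin M → (Fin n → ℝ), K ⊆ ⋃ j, (c' j +ᵥ ρ • B) := by
  classical
  obtain ⟨e⟩ := Function.Embedding.nonempty_of_card_le hcard
  refine ⟨fun n' => if hn : ∃ t, e t = n' then g hn.choose else 0, ?_⟩
  intro x hx
  obtain ⟨s, hs⟩ := Set.mem_iUnion.mp (hcov hx)
  apply Set.mem_iUnion.mpr
  refine ⟨e s, ?_⟩
  beta_reduce
  have hn : ∃ t, e t = e s := ⟨s, rfl⟩
  rw [dif_pos hn]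
  have heq : hn.choose = s := e.injective hn.choose_spec
  rw [heq]
  exact hs

lemma coord_le_pNorm (p : ℝ) (hp : 0 < p) {n : ℕ} (x : Fin n → ℝ) (hx : pNorm p x ≤ 1)
    (i : Fin n) : |x i| ≤ 1 := by
  by_contra h
  push_neg at h
  have h1 : (1:ℝ) < |x i| ^ p :=
    (Real.one_lt_rpow_iff_of_pos (by linarith)).mpr (Or.inl ⟨h, hp⟩)
  have h2 : |x i| ^ p ≤ ∑ j, |x j| ^ p := by
    apply Finset.single_le_sum (f := fun j => |x j| ^ p)
    · intro j _; positivity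
    · exact Finset.mem_univ i
  have h3 : (1:ℝ) < ∑ j, |x j| ^ p := lt_of_lt_of_le h1 h2
  have h4 : (1:ℝ) < (∑ j, |x j| ^ p) ^ (1/p) :=
    (Real.one_lt_rpow_iff_of_pos (by linarith : (0:ℝ) < ∑ j, |x j| ^ p)).mpr
      (Or.inl ⟨h3, by positivity⟩)
  have : (1:ℝ) < pNorm p x := h4
  linarith

lemma supNorm_le_one_of_pNorm_le (p : ℝ) (hp : 0 < p) {n : ℕ} (x : Fin n → ℝ)
    (hx : pNorm p x ≤ 1) : supNorm x ≤ 1 :=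
  Real.iSup_le (fun i => coord_le_pNorm p hp x hx i) zero_le_one

end EntropyAux
open EntropyAux in

/-- For `0 < p < ∞`, `d ≥ 2` and every `k > d + ⌈log₂ d⌉`,
`e_k(S_p^{d-1}, ℓ_∞^d) ≤ 2 · e_{k - d - ⌈log₂ d⌉}(B_p^{d-1}, ℓ_∞^{d-1})`. -/
theorem entropy_pSphere_le_shifted_ball (p : ℝ) (hp : 0 < p) (d : ℕ) (hd : 2 ≤ d)
    (k : ℕ) (hk : d + Nat.clog 2 d < k) :
    entropyNumber (pSphere p d) (supBall d) k ≤
      2 * entropyNumber (pBall p (d - 1)) (supBall (d - 1)) (k - d - Nat.clog 2 d) := by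
  classical
  obtain ⟨m, rfl⟩ : ∃ m, d = m + 1 := ⟨d - 1, by omega⟩
  set k' : ℕ := k - (m+1) - Nat.clog 2 (m+1) with hk'def
  set S : Set ℝ := {ε : ℝ | 0 < ε ∧ ∃ c : Fin (2 ^ (k - 1)) → (Fin (m+1) → ℝ),
    pSphere p (m+1) ⊆ ⋃ j, (c j +ᵥ ε • supBall (m+1))} with hS
  set S' : Set ℝ := {ε : ℝ | 0 < ε ∧ ∃ c : Fin (2 ^ (k' - 1)) → (Fin m → ℝ),
    pBall p m ⊆ ⋃ j, (c j +ᵥ ε • supBall m)} with hS'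
  have key : ∀ ε ∈ S', (2 * ε) ∈ S := by
    rintro ε ⟨hε, cc, hcc⟩
    have hN' : 0 < 2 ^ (k' - 1) := Nat.pow_pos (by norm_num)
    obtain ⟨g, hg⟩ := EntropyAux.master hp hε hN' cc hcc
    have hcard : Fintype.card
        (Fin (m+1) × Bool × Fin (2 ^ (k' - 1)) × (Fin m → Bool)) ≤
        Fintype.card (Fin (2 ^ (k - 1))) := by
      simp only [Fintype.card_prod, Fintype.card_bool, Fintype.card_fin,
        Fintype.card_fun]
      have h1 : m + 1 ≤ 2 ^ (Nat.clog 2 (m+1)) := Nat.le_pow_clog (by norm_num) _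
      have hsplit : 2 ^ (k - 1) =
          2 ^ (k' - 1) * (2 ^ (Nat.clog 2 (m+1)) * 2 ^ (m+1)) := by
        rw [← pow_add, ← pow_add]
        congr 1
        have hkk : (m+1) + Nat.clog 2 (m+1) < k := hk
        omega
      rw [hsplit]
      calc (m+1) * (2 * (2 ^ (k' - 1) * 2 ^ m))
          = 2 ^ (k' - 1) * ((m+1) * 2 ^ (m+1)) := by ring
        _ ≤ 2 ^ (k' - 1) * (2 ^ (Nat.clog 2 (m+1)) * 2 ^ (m+1)) := by
            apply Nat.mul_le_mul_left
            exact Nat.mul_le_mul_right _ h1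
    obtain ⟨c', hc'⟩ := EntropyAux.reindex_cover hcard g (2*ε) hg
    exact ⟨by linarith, c', hc'⟩
  have hbS : BddBelow S := ⟨0, fun ε hε => hε.1.le⟩
  have hne' : S'.Nonempty := by
    refine ⟨1, one_pos, fun _ => 0, fun x hx => ?_⟩
    have hmem : x ∈ ((0 : Fin m → ℝ) +ᵥ (1:ℝ) • supBall m) := by
      simp only [one_smul, zero_vadd]
      exact supNorm_le_one_of_pNorm_le p hp x hx
    exact Set.mem_iUnion.mpr ⟨⟨0, Nat.pow_pos (by norm_num)⟩, hmem⟩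
  have main : ∀ ε ∈ S', entropyNumber (pSphere p (m+1)) (supBall (m+1)) k ≤ 2 * ε :=
    fun ε hε => csInf_le hbS (key ε hε)
  have h2 : entropyNumber (pSphere p (m+1)) (supBall (m+1)) k / 2 ≤ sInf S' :=
    le_csInf hne' (fun ε hε => by linarith [main ε hε])
  show entropyNumber (pSphere p (m+1)) (supBall (m+1)) k ≤ 2 * sInf S'
  linarith
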